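/- arXiv:1302.5248 — 3 statements merged into one kernel-verified Lean document; each statement's English description precedes it below -/
import Mathlib

section
/- Let ξ:[0,π]→ℝ be defined by ξ(0)=0 and ξ'(t) = sin²t/√(1+sin²t). For t₀ ∈ (0,π], if τ₀ = 2·arccos(cos t₀/√2) − π/2, then ξ(t₀) = (1/2)·∫₀^{τ₀} √(sin τ) dτ. -/
open Real intervalIntegral

/-- The function ξ, antiderivative of sin²t/√(1+sin²t) vanishing at 0. -/
noncomputable def xi (t : ℝ) : ℝ := ∫ r in (0:ℝ)..t, sin r ^ 2 / Real.sqrt (1 + sin r ^ 2)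

/-- The turning-angle function τ(t) = 2·arccos(cos t/√2) − π/2. -/
noncomputable def tauf (t : ℝ) : ℝ := 2 * arccos (cos t / Real.sqrt 2) - π / 2

lemma sqrt2_pos' : (0:ℝ) < Real.sqrt 2 := Real.sqrt_pos.2 (by norm_num)

lemma my_sq (t : ℝ) : (cos t / Real.sqrt 2) ^ 2 = cos t ^ 2 / 2 := by
  rw [div_pow, Real.sq_sqrt (by norm_num : (0:ℝ) ≤ 2)]

lemma my_abs_le (t : ℝ) : |cos t / Real.sqrt 2| ≤ 1 := by
  rw [abs_div, abs_of_pos sqrt2_pos', div_le_one sqrt2_pos']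
  calc |cos t| ≤ 1 := abs_cos_le_one t
    _ ≤ Real.sqrt 2 := by
        rw [show (1:ℝ) = Real.sqrt 1 by simp]
        exact Real.sqrt_le_sqrt (by norm_num)

lemma sin_tauf (t : ℝ) : sin (tauf t) = sin t ^ 2 := by
  have h := abs_le.1 (my_abs_le t)
  rw [tauf, sin_sub_pi_div_two, cos_two_mul, Real.cos_arccos h.1 h.2, my_sq]
  nlinarith [sin_sq_add_cos_sq t]

lemma tauf_zero : tauf 0 = 0 := by
  have h1 : (1:ℝ) / Real.sqrt 2 = Real.sqrt 2 / 2 := by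
    rw [div_eq_div_iff (ne_of_gt sqrt2_pos') two_ne_zero, one_mul,
      Real.mul_self_sqrt (by norm_num : (0:ℝ) ≤ 2)]
  have h2 : Real.sqrt 2 / 2 = cos (π/4) := (Real.cos_pi_div_four).symm
  rw [tauf, cos_zero, h1, h2, Real.arccos_cos (by positivity) (by linarith [pi_pos])]
  ring

lemma hasDerivAt_tauf (t : ℝ) :
    HasDerivAt tauf (2 * sin t / Real.sqrt (1 + sin t ^ 2)) t := by
  have hsq : (cos t / Real.sqrt 2) ^ 2 < 1 := by
    rw [my_sq]; nlinarith [cos_sq_le_one t]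
  have habs : |cos t / Real.sqrt 2| < 1 := (sq_lt_one_iff_abs_lt_one _).1 hsq
  have h1 : cos t / Real.sqrt 2 ≠ -1 := by
    intro h; rw [h] at habs; simp at habs
  have h2 : cos t / Real.sqrt 2 ≠ 1 := by
    intro h; rw [h] at habs; simp at habs
  have hu : HasDerivAt (fun t => cos t / Real.sqrt 2) (-sin t / Real.sqrt 2) t :=
    (Real.hasDerivAt_cos t).div_const _
  have harc := (Real.hasDerivAt_arccos h1 h2).comp t hu
  have hτ : HasDerivAt tauf
      (2 * (-(1 / Real.sqrt (1 - (cos t / Real.sqrt 2) ^ 2)) * (-sin t / Real.sqrt 2))) t := by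
    unfold tauf
    exact ((harc.const_mul 2).sub_const (π / 2))
  convert hτ using 1
  have hs : Real.sqrt 2 * Real.sqrt (1 - (cos t / Real.sqrt 2) ^ 2)
      = Real.sqrt (1 + sin t ^ 2) := by
    rw [← Real.sqrt_mul (by norm_num : (0:ℝ) ≤ 2), my_sq]
    congr 1
    nlinarith [sin_sq_add_cos_sq t]
  rw [← hs]
  ring

theorem stmt_0 (t₀ τ₀ : ℝ) (ht₀ : t₀ ∈ Set.Ioc 0 π)
    (hτ₀ : τ₀ = 2 * arccos (cos t₀ / Real.sqrt 2) - π / 2) :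
    xi t₀ = (1 / 2) * ∫ τ in (0:ℝ)..τ₀, Real.sqrt (sin τ) := by
  obtain ⟨h0, hπ⟩ := ht₀
  have hcs : Continuous (fun τ : ℝ => Real.sqrt (sin τ)) :=
    continuous_sin.sqrt
  set G : ℝ → ℝ := fun t => (1/2) * ∫ τ in (0:ℝ)..tauf t, Real.sqrt (sin τ) with hG
  have hGd : ∀ t ∈ Set.uIcc 0 t₀,
      HasDerivAt G (sin t ^ 2 / Real.sqrt (1 + sin t ^ 2)) t := by
    intro t ht
    rw [Set.uIcc_of_le h0.le] at ht
    have hH : HasDerivAt (fun x => ∫ τ in (0:ℝ)..x, Real.sqrt (sin τ))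
        (Real.sqrt (sin (tauf t))) (tauf t) :=
      intervalIntegral.integral_hasDerivAt_right (hcs.intervalIntegrable _ _)
        (hcs.stronglyMeasurable.stronglyMeasurableAtFilter) hcs.continuousAt
    have := ((hH.comp t (hasDerivAt_tauf t)).const_mul (1/2 : ℝ))
    refine this.congr_deriv ?_
    have hsin : 0 ≤ sin t := sin_nonneg_of_nonneg_of_le_pi ht.1 (ht.2.trans hπ)
    rw [sin_tauf, Real.sqrt_sq hsin]
    have hpos : (0:ℝ) < Real.sqrt (1 + sin t ^ 2) := Real.sqrt_pos.2 (by positivity)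
    field_simp
  have hcont : Continuous (fun t : ℝ => sin t ^ 2 / Real.sqrt (1 + sin t ^ 2)) := by
    apply Continuous.div (by continuity) (by continuity)
    intro x
    exact ne_of_gt (Real.sqrt_pos.2 (by positivity))
  have key := intervalIntegral.integral_eq_sub_of_hasDerivAt hGd
    (hcont.intervalIntegrable _ _)
  have hG0 : G 0 = 0 := by simp [hG, tauf_zero]
  rw [xi, key, hG0, sub_zero, hG]
  rw [hτ₀]
  rfl
end

section
/- Let E(t) = sin t + i·ξ(t) with ξ'(t) = sin²t/√(1+sin²t), ξ(0)=0, with signed curvature κ(t) = 2 sin t. Then the turning angle of E on [0,b] satisfies ∫₀^b κ(t)|E'(t)| dt = 2·arccos(cos b/√2) − π/2 for b ∈ [0,π]. -/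
open Real

theorem stmt_3 (b : ℝ) (hb : b ∈ Set.Icc 0 π) :
    ∫ t in (0:ℝ)..b, (2 * Real.sin t) * (1 / Real.sqrt (1 + Real.sin t ^ 2)) =
      2 * arccos (Real.cos b / Real.sqrt 2) - π / 2 := by
  have h2 : (0:ℝ) < Real.sqrt 2 := Real.sqrt_pos.2 (by norm_num)
  have hs2 : Real.sqrt 2 ^ 2 = 2 := Real.sq_sqrt (by norm_num)
  have key : ∀ t : ℝ, HasDerivAt (fun t => 2 * arccos (Real.cos t / Real.sqrt 2))
      ((2 * Real.sin t) * (1 / Real.sqrt (1 + Real.sin t ^ 2))) t := by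
    intro t
    have hx : |Real.cos t / Real.sqrt 2| < 1 := by
      rw [abs_div, abs_of_pos h2, div_lt_one h2]
      have := Real.abs_cos_le_one t
      nlinarith [Real.sqrt_nonneg (2:ℝ)]
    have h1 : Real.cos t / Real.sqrt 2 ≠ -1 := by
      intro h; rw [h] at hx; norm_num at hx
    have h1' : Real.cos t / Real.sqrt 2 ≠ 1 := by
      intro h; rw [h] at hx; norm_num at hx
    have harccos := (Real.hasDerivAt_arccos h1 h1').comp t
      ((Real.hasDerivAt_cos t).div_const (Real.sqrt 2))
    have hmul := harccos.const_mul 2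
    convert hmul using 1
    case e'_4 => rfl
    case e'_5 => rfl
    case e'_8 => rfl
    have heq : 1 - (Real.cos t / Real.sqrt 2) ^ 2 = (1 + Real.sin t ^ 2) / 2 := by
      field_simp
      nlinarith [Real.sin_sq_add_cos_sq t]
    rw [heq, Real.sqrt_div (by positivity : (0:ℝ) ≤ 1 + Real.sin t ^ 2)]
    have hpos : (0:ℝ) < Real.sqrt (1 + Real.sin t ^ 2) := Real.sqrt_pos.2 (by positivity)
    field_simp
  have hcont : Continuous fun t => (2 * Real.sin t) * (1 / Real.sqrt (1 + Real.sin t ^ 2)) := by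
    apply (continuous_const.mul Real.continuous_sin).mul
    apply continuous_const.div
    · exact Real.continuous_sqrt.comp (by continuity)
    · intro t
      exact ne_of_gt (Real.sqrt_pos.2 (by positivity))
  rw [intervalIntegral.integral_eq_sub_of_hasDerivAt (fun t _ => key t)
    (hcont.intervalIntegrable 0 b)]
  have h0 : Real.cos 0 / Real.sqrt 2 = Real.cos (π/4) := by
    rw [Real.cos_zero, Real.cos_pi_div_four]
    rw [div_eq_div_iff h2.ne' (by norm_num : (2:ℝ) ≠ 0)]
    nlinarith
  rw [h0, Real.arccos_cos (by positivity) (by linarith [Real.pi_pos])]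
  ring
end

section
/- Let κ : [0,L] → (0,∞) be continuous with ∫₀^L κ(s) ds = π, let τ(s) = ∫₀^s κ(r) dr, and suppose d = ∫₀^L sin(τ(s)) ds where d = (1/2)∫₀^π √(sin τ) dτ. Then (1/4)∫₀^L κ(s)² ds ≥ d. -/
open Real MeasureTheory intervalIntegral Set

theorem stmt_7 (L : ℝ) (hL : 0 < L) (κ : ℝ → ℝ)
    (hcont : ContinuousOn κ (Set.Icc 0 L))
    (hpos : ∀ s ∈ Set.Icc 0 L, 0 < κ s)
    (hturn : ∫ s in (0:ℝ)..L, κ s = π)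
    (τ : ℝ → ℝ) (hτ : ∀ s, τ s = ∫ r in (0:ℝ)..s, κ r)
    (d : ℝ) (hd : d = (1 / 2) * ∫ τ' in (0:ℝ)..π, Real.sqrt (Real.sin τ'))
    (hheight : d = ∫ s in (0:ℝ)..L, Real.sin (τ s)) :
    (1 / 4) * ∫ s in (0:ℝ)..L, κ s ^ 2 ≥ d := by
  have hL' : (0:ℝ) ≤ L := hL.le
  have huIcc : Set.uIcc (0:ℝ) L = Set.Icc 0 L := Set.uIcc_of_le hL'
  have τfun : τ = fun x => ∫ r in (0:ℝ)..x, κ r := funext hτ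
  -- integrability of κ on subintervals of [0, L]
  have hκint : ∀ a b : ℝ, Set.uIcc a b ⊆ Set.Icc 0 L →
      IntervalIntegrable κ volume a b := fun a b h =>
    (hcont.mono h).intervalIntegrable
  -- continuity of τ on [0, L]
  have τcont : ContinuousOn τ (Set.Icc 0 L) := by
    rw [τfun, ← huIcc]
    exact continuousOn_primitive_interval (by rw [huIcc]; exact hcont.integrableOn_Icc)
  have τ0 : τ 0 = 0 := by rw [hτ, intervalIntegral.integral_same]
  have τL : τ L = π := by rw [hτ, hturn]
  -- τ s ∈ [0, π] for s ∈ [0, L]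
  have τmem : ∀ s ∈ Set.Icc (0:ℝ) L, τ s ∈ Set.Icc (0:ℝ) π := by
    intro s hs
    have h1 : Set.uIcc (0:ℝ) s ⊆ Set.Icc 0 L := by
      rw [Set.uIcc_of_le hs.1]; exact Set.Icc_subset_Icc le_rfl hs.2
    have h2 : Set.uIcc s L ⊆ Set.Icc 0 L := by
      rw [Set.uIcc_of_le hs.2]; exact Set.Icc_subset_Icc hs.1 le_rfl
    have hadd := intervalIntegral.integral_add_adjacent_intervals
      (hκint 0 s h1) (hκint s L h2)
    rw [hturn] at hadd
    have hge : (0:ℝ) ≤ ∫ r in (0:ℝ)..s, κ r :=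
      intervalIntegral.integral_nonneg hs.1 (fun r hr => (hpos r (h1 ⟨(Set.uIcc_of_le hs.1 ▸ hr).1, (Set.uIcc_of_le hs.1 ▸ hr).2⟩)).le)
    have hge2 : (0:ℝ) ≤ ∫ r in s..L, κ r :=
      intervalIntegral.integral_nonneg hs.2 (fun r hr => (hpos r (h2 ⟨(Set.uIcc_of_le hs.2 ▸ hr).1, (Set.uIcc_of_le hs.2 ▸ hr).2⟩)).le)
    rw [hτ]
    constructor
    · exact hge
    · linarith
  -- derivative of τ on the interior
  have hderiv : ∀ x ∈ Set.Ioo (0:ℝ) L, HasDerivAt τ (κ x) x := by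
    intro x hx
    have hnb : Set.Icc (0:ℝ) L ∈ nhds x := Icc_mem_nhds hx.1 hx.2
    have hca : ContinuousAt κ x := hcont.continuousAt hnb
    have hmeas : StronglyMeasurableAtFilter κ (nhds x) volume :=
      ContinuousOn.stronglyMeasurableAtFilter isOpen_Ioo
        (hcont.mono Set.Ioo_subset_Icc_self) x hx
    rw [τfun]
    exact intervalIntegral.integral_hasDerivAt_right
      (hκint 0 x (by rw [Set.uIcc_of_le hx.1.le]; exact Set.Icc_subset_Icc le_rfl hx.2.le))
      hmeas hca
  -- change of variables
  have hcov : (∫ s in (0:ℝ)..L, ((fun t => Real.sqrt (Real.sin t)) ∘ τ) s * κ s)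
      = ∫ t in (0:ℝ)..π, Real.sqrt (Real.sin t) := by
    have := intervalIntegral.integral_comp_mul_deriv'' (a := (0:ℝ)) (b := L)
      (f := τ) (f' := κ) (g := fun t => Real.sqrt (Real.sin t))
      (by rw [huIcc]; exact τcont)
      (by
        intro x hx
        rw [min_eq_left hL', max_eq_right hL'] at hx
        exact (hderiv x hx).hasDerivWithinAt)
      (by rw [huIcc]; exact hcont)
      ((Real.continuous_sqrt.comp Real.continuous_sin).continuousOn)
    rw [τ0, τL] at this
    exact this
  have h2d : (∫ s in (0:ℝ)..L, Real.sqrt (Real.sin (τ s)) * κ s) = 2 * d := by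
    rw [hd]
    have : ((fun t => Real.sqrt (Real.sin t)) ∘ τ) = fun s => Real.sqrt (Real.sin (τ s)) := rfl
    rw [← hcov, this]
    ring_nf
  -- integrability of the two sides of the pointwise bound
  have int1 : IntervalIntegrable (fun s => Real.sqrt (Real.sin (τ s)) * κ s) volume 0 L := by
    apply ContinuousOn.intervalIntegrable
    rw [huIcc]
    exact ((Real.continuous_sqrt.comp Real.continuous_sin).comp_continuousOn τcont).mul hcont
  have intκ2 : IntervalIntegrable (fun s => (1/4 : ℝ) * κ s ^ 2) volume 0 L := by
    apply ContinuousOn.intervalIntegrable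
    rw [huIcc]
    exact continuousOn_const.mul (hcont.pow 2)
  have intsin : IntervalIntegrable (fun s => Real.sin (τ s)) volume 0 L := by
    apply ContinuousOn.intervalIntegrable
    rw [huIcc]
    exact Real.continuous_sin.comp_continuousOn τcont
  have key : (∫ s in (0:ℝ)..L, Real.sqrt (Real.sin (τ s)) * κ s)
      ≤ ∫ s in (0:ℝ)..L, ((1/4 : ℝ) * κ s ^ 2 + Real.sin (τ s)) := by
    apply intervalIntegral.integral_mono_on hL' int1 (intκ2.add intsin)
    intro s hs
    have hsin : 0 ≤ Real.sin (τ s) :=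
      Real.sin_nonneg_of_nonneg_of_le_pi (τmem s hs).1 (τmem s hs).2
    have hsq : Real.sqrt (Real.sin (τ s)) ^ 2 = Real.sin (τ s) := Real.sq_sqrt hsin
    nlinarith [sq_nonneg (κ s / 2 - Real.sqrt (Real.sin (τ s)))]
  rw [intervalIntegral.integral_add intκ2 intsin, h2d, ← hheight,
    intervalIntegral.integral_const_mul] at key
  linarith
end
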